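/- arXiv:2005.01519 — 3 statements merged into one kernel-verified Lean document; each statement's English description precedes it below -/
import Mathlib

section
/- If (A, D(A)) is the generator of a strongly continuous semigroup (S(t)) on a Hilbert space H, H decomposes orthogonally as H = H₀ ⊕ H₁ with both subspaces closed and invariant under S(t), and ‖S(t)x₀‖ ≤ e^{−λ₀ t}‖x₀‖ for x₀ ∈ H₀ and ‖S(t)x₁‖ ≤ e^{λ₁ t}‖x₁‖ for x₁ ∈ H₁ (λ₀ > 0, λ₁ ≥ 0), then for all x ∈ D(A): ⟨Ax, x⟩ ≤ −λ₀‖x‖² + (λ₀ + λ₁)‖P₁x‖², where P₁ is the orthogonal projection onto H₁. -/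
open scoped RealInnerProductSpace

private lemma deriv_nonpos_aux {φ : ℝ → ℝ} {d : ℝ}
    (h : HasDerivWithinAt φ d (Set.Ici 0) 0) (h0 : φ 0 = 0)
    (hle : ∀ t ≥ (0:ℝ), φ t ≤ 0) : d ≤ 0 := by
  have h' := hasDerivWithinAt_iff_tendsto_slope.mp h
  rw [Set.Ici_sdiff_left] at h'
  refine le_of_tendsto h' ?_
  filter_upwards [self_mem_nhdsWithin] with t ht
  have ht0 : 0 < t := ht
  have : slope φ 0 t = φ t / t := by
    simp [slope_def_field, h0]
  rw [this]
  exact div_nonpos_of_nonpos_of_nonneg (hle t ht.le) ht0.le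

theorem stmt0
    {H : Type*} [NormedAddCommGroup H] [InnerProductSpace ℝ H] [CompleteSpace H]
    (S : ℝ → H →L[ℝ] H)
    (hS0 : S 0 = ContinuousLinearMap.id ℝ H)
    (hSadd : ∀ s t : ℝ, 0 ≤ s → 0 ≤ t → S (s + t) = (S s).comp (S t))
    (hScont : ∀ x : H, ContinuousOn (fun t => S t x) (Set.Ici 0))
    (H₀ H₁ : Submodule ℝ H) [Submodule.HasOrthogonalProjection H₀] [Submodule.HasOrthogonalProjection H₁]
    (horth : H₁ = H₀ᗮ)
    (hinv0 : ∀ t ≥ (0:ℝ), ∀ x ∈ H₀, S t x ∈ H₀)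
    (hinv1 : ∀ t ≥ (0:ℝ), ∀ x ∈ H₁, S t x ∈ H₁)
    (lam₀ lam₁ : ℝ) (hlam₀ : 0 < lam₀) (hlam₁ : 0 ≤ lam₁)
    (hc0 : ∀ t ≥ (0:ℝ), ∀ x ∈ H₀, ‖S t x‖ ≤ Real.exp (-lam₀ * t) * ‖x‖)
    (hc1 : ∀ t ≥ (0:ℝ), ∀ x ∈ H₁, ‖S t x‖ ≤ Real.exp (lam₁ * t) * ‖x‖)
    (D : Set H) (A : H → H)
    (hgen : ∀ x ∈ D, HasDerivWithinAt (fun t => S t x) (A x) (Set.Ici 0) 0) :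
    ∀ x ∈ D, ⟪A x, x⟫ ≤ -lam₀ * ‖x‖ ^ 2
      + (lam₀ + lam₁) * ‖(H₁.orthogonalProjectionOnto x : H)‖ ^ 2 := by
  intro x hx
  set x₁ : H := (H₁.orthogonalProjectionOnto x : H) with hx₁def
  set x₀ : H := x - x₁ with hx₀def
  have hx₁ : x₁ ∈ H₁ := (H₁.orthogonalProjectionOnto x).2
  have hx₀ : x₀ ∈ H₀ := by
    have h1 : x₀ ∈ H₁ᗮ := H₁.sub_starProjection_mem_orthogonal x
    rwa [horth, Submodule.orthogonal_orthogonal] at h1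
  have hx₁' : x₁ ∈ H₀ᗮ := horth ▸ hx₁
  have hsum : x = x₀ + x₁ := by simp [hx₀def]
  -- orthogonality of the evolved components
  have hS0x : ∀ x : H, S 0 x = x := by intro y; rw [hS0]; rfl
  -- norm comparison on Ici 0
  have key : ∀ t ≥ (0:ℝ), ‖S t x‖ ^ 2 ≤
      ‖x₀‖ ^ 2 * Real.exp (-(2 * lam₀) * t) + ‖x₁‖ ^ 2 * Real.exp ((2 * lam₁) * t) := by
    intro t ht
    have hmem0 : S t x₀ ∈ H₀ := hinv0 t ht x₀ hx₀
    have hmem1 : S t x₁ ∈ H₁ := hinv1 t ht x₁ hx₁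
    have hperp : ⟪S t x₀, S t x₁⟫ = 0 := by
      have := (horth ▸ hmem1 : S t x₁ ∈ H₀ᗮ)
      exact this (S t x₀) hmem0
    have hdecomp : S t x = S t x₀ + S t x₁ := by
      rw [hsum, map_add]
    have hsq : ‖S t x‖ ^ 2 = ‖S t x₀‖ ^ 2 + ‖S t x₁‖ ^ 2 := by
      rw [hdecomp, norm_add_sq_real, hperp]; ring
    have h0 : ‖S t x₀‖ ^ 2 ≤ ‖x₀‖ ^ 2 * Real.exp (-(2 * lam₀) * t) := by
      have h := hc0 t ht x₀ hx₀
      have := mul_self_le_mul_self (norm_nonneg _) h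
      calc ‖S t x₀‖ ^ 2 = ‖S t x₀‖ * ‖S t x₀‖ := by ring
        _ ≤ (Real.exp (-lam₀ * t) * ‖x₀‖) * (Real.exp (-lam₀ * t) * ‖x₀‖) := this
        _ = ‖x₀‖ ^ 2 * Real.exp (-(2 * lam₀) * t) := by
            rw [show (-(2 * lam₀) * t) = (-lam₀ * t) + (-lam₀ * t) by ring, Real.exp_add]
            ring
    have h1 : ‖S t x₁‖ ^ 2 ≤ ‖x₁‖ ^ 2 * Real.exp ((2 * lam₁) * t) := by
      have h := hc1 t ht x₁ hx₁
      have := mul_self_le_mul_self (norm_nonneg _) h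
      calc ‖S t x₁‖ ^ 2 = ‖S t x₁‖ * ‖S t x₁‖ := by ring
        _ ≤ (Real.exp (lam₁ * t) * ‖x₁‖) * (Real.exp (lam₁ * t) * ‖x₁‖) := this
        _ = ‖x₁‖ ^ 2 * Real.exp ((2 * lam₁) * t) := by
            rw [show ((2 * lam₁) * t) = (lam₁ * t) + (lam₁ * t) by ring, Real.exp_add]
            ring
    rw [hsq]; exact add_le_add h0 h1
  -- derivative of ‖S t x‖²
  have hfderiv : HasDerivWithinAt (fun t => ⟪S t x, S t x⟫)
      (2 * ⟪A x, x⟫) (Set.Ici 0) 0 := by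
    have hd := hgen x hx
    have := hd.inner ℝ hd
    simp only [hS0x] at this
    refine this.congr_deriv ?_
    rw [real_inner_comm]; ring
  -- derivative of the bound
  have hgderiv : HasDerivWithinAt
      (fun t => ‖x₀‖ ^ 2 * Real.exp (-(2 * lam₀) * t) + ‖x₁‖ ^ 2 * Real.exp ((2 * lam₁) * t))
      (‖x₀‖ ^ 2 * (-(2 * lam₀)) + ‖x₁‖ ^ 2 * (2 * lam₁)) (Set.Ici 0) 0 := by
    have e0 : HasDerivAt (fun t : ℝ => Real.exp (-(2 * lam₀) * t)) (-(2 * lam₀)) 0 := by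
      have := (hasDerivAt_id (0:ℝ)).const_mul (-(2 * lam₀))
      have := this.exp
      simpa using this
    have e1 : HasDerivAt (fun t : ℝ => Real.exp ((2 * lam₁) * t)) (2 * lam₁) 0 := by
      have := (hasDerivAt_id (0:ℝ)).const_mul (2 * lam₁)
      have := this.exp
      simpa using this
    exact ((e0.const_mul (‖x₀‖ ^ 2)).add (e1.const_mul (‖x₁‖ ^ 2))).hasDerivWithinAt
  -- compare derivatives
  have hφ : HasDerivWithinAt
      (fun t => ⟪S t x, S t x⟫ -
        (‖x₀‖ ^ 2 * Real.exp (-(2 * lam₀) * t) + ‖x₁‖ ^ 2 * Real.exp ((2 * lam₁) * t)))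
      (2 * ⟪A x, x⟫ - (‖x₀‖ ^ 2 * (-(2 * lam₀)) + ‖x₁‖ ^ 2 * (2 * lam₁)))
      (Set.Ici 0) 0 := hfderiv.sub hgderiv
  have hperpx : ⟪x₀, x₁⟫ = 0 := hx₁' x₀ hx₀
  have hnormx : ‖x‖ ^ 2 = ‖x₀‖ ^ 2 + ‖x₁‖ ^ 2 := by
    rw [hsum, norm_add_sq_real, hperpx]; ring
  have hd0 : 2 * ⟪A x, x⟫ - (‖x₀‖ ^ 2 * (-(2 * lam₀)) + ‖x₁‖ ^ 2 * (2 * lam₁)) ≤ 0 := by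
    apply deriv_nonpos_aux hφ
    · simp [hS0x, real_inner_self_eq_norm_sq, hnormx]
    · intro t ht
      have := key t ht
      rw [real_inner_self_eq_norm_sq]
      linarith
  nlinarith [hd0, hnormx]
end

section
/- Suppose (S(t)) is a strongly continuous semigroup on a Hilbert space H, P is an orthogonal projection on H, and there is λ₀ > 0 with ‖S(t)x − Px‖ ≤ e^{−λ₀ t}‖x − Px‖ for all t ≥ 0 and x ∈ H. Then (S(t)) leaves ker(P) and ran(P) invariant; moreover S(t) restricted to ran(P) is the identity and S(t) is a contraction semigroup on H. -/
open scoped RealInnerProductSpace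

theorem stmt2
    {H : Type*} [NormedAddCommGroup H] [InnerProductSpace ℝ H] [CompleteSpace H]
    (S : ℝ → H →L[ℝ] H)
    (hS0 : S 0 = ContinuousLinearMap.id ℝ H)
    (hSadd : ∀ s t : ℝ, 0 ≤ s → 0 ≤ t → S (s + t) = (S s).comp (S t))
    (hScont : ∀ x : H, ContinuousOn (fun t => S t x) (Set.Ici 0))
    (P : H →L[ℝ] H)
    (hidem : ∀ x, P (P x) = P x)
    (hsym : ∀ x y, ⟪P x, y⟫ = ⟪x, P y⟫)
    (lam₀ : ℝ) (hlam₀ : 0 < lam₀)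
    (hest : ∀ t ≥ (0:ℝ), ∀ x : H, ‖S t x - P x‖ ≤ Real.exp (-lam₀ * t) * ‖x - P x‖) :
    (∀ t ≥ (0:ℝ), ∀ x : H, P x = 0 → P (S t x) = 0) ∧
    (∀ t ≥ (0:ℝ), ∀ x : H, P x = x → S t x ∈ Set.range P) ∧
    (∀ t ≥ (0:ℝ), ∀ x : H, P x = x → S t x = x) ∧
    (∀ t ≥ (0:ℝ), ∀ x : H, ‖S t x‖ ≤ ‖x‖) := by
  have hfix : ∀ t ≥ (0:ℝ), ∀ x : H, P x = x → S t x = x := by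
    intro t ht x hx
    have h := hest t ht x
    rw [hx, sub_self, norm_zero, mul_zero] at h
    have := norm_nonneg (S t x - x)
    have h0 : ‖S t x - x‖ = 0 := le_antisymm h this
    rwa [norm_sub_eq_zero_iff] at h0
  have hexp : Filter.Tendsto (fun s : ℝ => Real.exp (-lam₀ * s)) Filter.atTop (nhds 0) := by
    apply Real.tendsto_exp_atBot.comp
    apply Filter.Tendsto.const_mul_atTop_of_neg (by linarith : -lam₀ < 0) Filter.tendsto_id
  have hker : ∀ t ≥ (0:ℝ), ∀ x : H, P x = 0 → P (S t x) = 0 := by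
    intro t ht x hx
    set y := S t x with hy
    have key : ∀ s ≥ (0:ℝ), ‖P y‖ ≤
        Real.exp (-lam₀ * s) * ‖y - P y‖ + Real.exp (-lam₀ * (s + t)) * ‖x‖ := by
      intro s hs
      have h1 := hest s hs y
      have h2 := hest (s + t) (by linarith) x
      rw [hx, sub_zero, sub_zero] at h2
      have h3 : S (s + t) x = S s y := by rw [hSadd s t hs ht]; rfl
      rw [h3] at h2
      calc ‖P y‖ = ‖(P y - S s y) + S s y‖ := by rw [sub_add_cancel]
        _ ≤ ‖P y - S s y‖ + ‖S s y‖ := norm_add_le _ _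
        _ = ‖S s y - P y‖ + ‖S s y‖ := by rw [norm_sub_rev]
        _ ≤ Real.exp (-lam₀ * s) * ‖y - P y‖ + Real.exp (-lam₀ * (s + t)) * ‖x‖ :=
            add_le_add h1 h2
    have hlim : Filter.Tendsto (fun s : ℝ =>
        Real.exp (-lam₀ * s) * ‖y - P y‖ + Real.exp (-lam₀ * (s + t)) * ‖x‖)
        Filter.atTop (nhds 0) := by
      have h2 : Filter.Tendsto (fun s : ℝ => Real.exp (-lam₀ * (s + t))) Filter.atTop (nhds 0) := by
        apply Real.tendsto_exp_atBot.comp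
        apply Filter.Tendsto.const_mul_atTop_of_neg (by linarith : -lam₀ < 0)
        exact Filter.tendsto_atTop_add_const_right _ t Filter.tendsto_id
      simpa using (hexp.mul_const ‖y - P y‖).add (h2.mul_const ‖x‖)
    have hle : ‖P y‖ ≤ 0 := by
      refine ge_of_tendsto hlim ?_
      filter_upwards [Filter.eventually_ge_atTop (0:ℝ)] with s hs using key s hs
    have : ‖P y‖ = 0 := le_antisymm hle (norm_nonneg _)
    rwa [norm_eq_zero] at this
  refine ⟨hker, ?_, hfix, ?_⟩
  · intro t ht x hx
    exact ⟨x, by rw [hfix t ht x hx, hx]⟩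
  · intro t ht x
    have hPx : S t (P x) = P x := hfix t ht (P x) (hidem x)
    have hsplit : S t x = P x + S t (x - P x) := by
      rw [map_sub, hPx]; abel
    have hkx : P (x - P x) = 0 := by rw [map_sub, hidem, sub_self]
    have horth : ⟪P x, S t (x - P x)⟫ = 0 := by
      rw [hsym, hker t ht _ hkx, inner_zero_right]
    have horth2 : ⟪P x, x - P x⟫ = 0 := by rw [hsym, hkx, inner_zero_right]
    have hnorm1 : ‖S t x‖ ^ 2 = ‖P x‖ ^ 2 + ‖S t (x - P x)‖ ^ 2 := by
      rw [hsplit, @norm_add_sq_real, horth]; ring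
    have hnorm2 : ‖x‖ ^ 2 = ‖P x‖ ^ 2 + ‖x - P x‖ ^ 2 := by
      have : x = P x + (x - P x) := by abel
      nth_rewrite 1 [this]
      rw [@norm_add_sq_real, horth2]; ring
    have hS : ‖S t (x - P x)‖ ≤ ‖x - P x‖ := by
      have h := hest t ht (x - P x)
      rw [hkx, sub_zero, sub_zero] at h
      calc ‖S t (x - P x)‖ ≤ Real.exp (-lam₀ * t) * ‖x - P x‖ := h
        _ ≤ 1 * ‖x - P x‖ := by
            apply mul_le_mul_of_nonneg_right _ (norm_nonneg _)
            exact Real.exp_le_one_iff.mpr (by nlinarith)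
        _ = ‖x - P x‖ := one_mul _
    have hsq : ‖S t x‖ ^ 2 ≤ ‖x‖ ^ 2 := by
      rw [hnorm1, hnorm2]
      have := sq_le_sq' (by linarith [norm_nonneg (S t (x - P x))]) hS
      linarith
    nlinarith [norm_nonneg (S t x), norm_nonneg x]
end

section
/- Define σ¹(h)(x) = ∫_x^∞ min(e^{−βy}, |h'(y)|) dy for h in the Filipović space H_β. Then σ¹(h) ∈ H_β⁰ (long rate zero) with ‖σ¹(h)‖²_β ≤ 1/β, and σ¹ is Lipschitz: ‖σ¹(h₁) − σ¹(h₂)‖²_β ≤ ‖h₁ − h₂‖²_β for all h₁, h₂ ∈ H_β. Moreover σ¹(c) = 0 for every constant function c. -/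
open MeasureTheory Filter

lemma minlip (a b c : ℝ) : |min a b - min a c| ≤ |b - c| := by
  rcases le_total a b with h1 | h1 <;> rcases le_total a c with h2 | h2
  · rw [min_eq_left h1, min_eq_left h2, sub_self, abs_zero]; exact abs_nonneg _
  · rw [min_eq_left h1, min_eq_right h2, abs_of_nonneg (by linarith)]
    linarith [le_abs_self (b - c)]
  · rw [min_eq_right h1, min_eq_left h2, abs_of_nonpos (by linarith)]
    linarith [neg_abs_le (b - c)]
  · rw [min_eq_right h1, min_eq_right h2]

lemma exp_tendsto_zero (β : ℝ) (hβ : 0 < β) :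
    Tendsto (fun y : ℝ => Real.exp (-β * y)) atTop (nhds 0) :=
  Real.tendsto_exp_atBot.comp (tendsto_id.const_mul_atTop_of_neg (neg_neg_iff_pos.2 hβ))

lemma exp_tail (β : ℝ) (hβ : 0 < β) (a : ℝ) :
    ∫ y in Set.Ioi a, Real.exp (-β * y) = Real.exp (-β * a) / β := by
  have h := integral_Ioi_of_hasDerivAt_of_tendsto'
    (f := fun y => -Real.exp (-β * y) / β) (f' := fun y => Real.exp (-β * y)) (a := a) (m := 0)
    (fun x _ => by
      simpa [hβ.ne'] using ((hasDerivAt_id x).const_mul β).neg.exp.neg.div_const β)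
    (exp_neg_integrableOn_Ioi a hβ)
    (by simpa using ((exp_tendsto_zero β hβ).neg).div_const β)
  rw [h]; ring

/-- The HJMM volatility example `σ¹(h)(x) = ∫ₓ^∞ min(e^{−βy}, |h'(y)|) dy`:
it has long rate zero, `‖σ¹(h)‖²_β ≤ 1/β` (since `σ¹(h)'(x) = −min(e^{−βx}, |h'(x)|)`,
the squared β-norm is the stated integral), it is 1-Lipschitz in the β-norm, and it
vanishes on constant functions. -/
theorem stmt18
    (β : ℝ) (hβ : 0 < β) (h' : ℝ → ℝ) (hmeas : Measurable h')
    (hint : IntegrableOn (fun x => (h' x) ^ 2 * Real.exp (β * x)) (Set.Ici 0)) :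
    -- σ¹(h) has long rate zero:
    (Tendsto (fun x => ∫ y in Set.Ici x, min (Real.exp (-β * y)) |h' y|) atTop (nhds 0)) ∧
    -- ‖σ¹(h)‖²_β ≤ 1/β:
    ((∫ x in Set.Ici (0:ℝ), (min (Real.exp (-β * x)) |h' x|) ^ 2 * Real.exp (β * x))
        ≤ 1 / β) ∧
    -- Lipschitz bound ‖σ¹(h₁) − σ¹(h₂)‖²_β ≤ ‖h₁ − h₂‖²_β:
    (∀ h₁' h₂' : ℝ → ℝ, Measurable h₁' → Measurable h₂' →
      IntegrableOn (fun x => (h₁' x - h₂' x) ^ 2 * Real.exp (β * x)) (Set.Ici 0) →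
      (∫ x in Set.Ici (0:ℝ),
          (min (Real.exp (-β * x)) |h₁' x| - min (Real.exp (-β * x)) |h₂' x|) ^ 2
            * Real.exp (β * x))
        ≤ ∫ x in Set.Ici (0:ℝ), (h₁' x - h₂' x) ^ 2 * Real.exp (β * x)) ∧
    -- σ¹(c) = 0 for constant functions c (whose derivative vanishes):
    (∀ x : ℝ, (∫ y in Set.Ici x, min (Real.exp (-β * y)) |(0:ℝ)|) = 0) := by
  have hmin_nonneg : ∀ y, 0 ≤ min (Real.exp (-β * y)) |h' y| := fun y =>
    le_min (Real.exp_nonneg _) (abs_nonneg _)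
  have hmin_le : ∀ y, min (Real.exp (-β * y)) |h' y| ≤ Real.exp (-β * y) := fun y => min_le_left _ _
  have hmin_meas : Measurable fun y => min (Real.exp (-β * y)) |h' y| :=
    (Real.measurable_exp.comp (measurable_const.mul measurable_id)).min hmeas.abs
  have hmin_int : ∀ a : ℝ, IntegrableOn (fun y => min (Real.exp (-β * y)) |h' y|) (Set.Ioi a) := by
    intro a
    refine Integrable.mono' (exp_neg_integrableOn_Ioi a hβ)
      hmin_meas.aestronglyMeasurable (ae_of_all _ fun y => ?_)
    rw [Real.norm_eq_abs, abs_of_nonneg (hmin_nonneg y)]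
    exact hmin_le y
  refine ⟨?_, ?_, ?_, ?_⟩
  · -- long rate zero
    have hbound : ∀ x : ℝ,
        (∫ y in Set.Ici x, min (Real.exp (-β * y)) |h' y|) ≤ Real.exp (-β * x) / β := by
      intro x
      rw [MeasureTheory.integral_Ici_eq_integral_Ioi, ← exp_tail β hβ x]
      exact setIntegral_mono_on (hmin_int x) (exp_neg_integrableOn_Ioi x hβ)
        measurableSet_Ioi (fun y _ => hmin_le y)
    have h0 : ∀ x : ℝ, 0 ≤ ∫ y in Set.Ici x, min (Real.exp (-β * y)) |h' y| := fun x =>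
      setIntegral_nonneg measurableSet_Ici (fun y _ => hmin_nonneg y)
    refine squeeze_zero h0 hbound ?_
    simpa using (exp_tendsto_zero β hβ).div_const β
  · -- norm bound
    have key : ∀ x : ℝ, (min (Real.exp (-β * x)) |h' x|) ^ 2 * Real.exp (β * x)
        ≤ Real.exp (-β * x) := by
      intro x
      have h1 : (min (Real.exp (-β * x)) |h' x|) ^ 2 ≤ (Real.exp (-β * x)) ^ 2 :=
        pow_le_pow_left₀ (hmin_nonneg x) (hmin_le x) 2
      calc (min (Real.exp (-β * x)) |h' x|) ^ 2 * Real.exp (β * x)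
          ≤ (Real.exp (-β * x)) ^ 2 * Real.exp (β * x) :=
            mul_le_mul_of_nonneg_right h1 (Real.exp_nonneg _)
        _ = Real.exp (-β * x) := by
            rw [sq, mul_assoc, ← Real.exp_add, ← Real.exp_add]; ring_nf
    have hexpint : IntegrableOn (fun x : ℝ => Real.exp (-β * x)) (Set.Ici 0) :=
      Iff.mpr integrableOn_Ici_iff_integrableOn_Ioi (exp_neg_integrableOn_Ioi 0 hβ)
    have hintl : IntegrableOn
        (fun x => (min (Real.exp (-β * x)) |h' x|) ^ 2 * Real.exp (β * x)) (Set.Ici 0) := by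
      refine Integrable.mono' hexpint
        ((hmin_meas.pow_const 2).mul
          (Real.measurable_exp.comp (measurable_const.mul measurable_id))).aestronglyMeasurable
        (ae_of_all _ fun x => ?_)
      rw [Real.norm_eq_abs, abs_of_nonneg (mul_nonneg (sq_nonneg _) (Real.exp_nonneg _))]
      exact key x
    calc (∫ x in Set.Ici (0:ℝ), (min (Real.exp (-β * x)) |h' x|) ^ 2 * Real.exp (β * x))
        ≤ ∫ x in Set.Ici (0:ℝ), Real.exp (-β * x) :=
          setIntegral_mono_on hintl hexpint measurableSet_Ici (fun x _ => key x)
      _ = 1 / β := by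
          rw [MeasureTheory.integral_Ici_eq_integral_Ioi, exp_tail β hβ 0]
          simp
  · -- Lipschitz
    intro h₁' h₂' hm₁ hm₂ hint₁₂
    have key : ∀ x : ℝ,
        (min (Real.exp (-β * x)) |h₁' x| - min (Real.exp (-β * x)) |h₂' x|) ^ 2 * Real.exp (β * x)
        ≤ (h₁' x - h₂' x) ^ 2 * Real.exp (β * x) := by
      intro x
      refine mul_le_mul_of_nonneg_right ?_ (Real.exp_nonneg _)
      have h1 : abs (min (Real.exp (-β * x)) |h₁' x| - min (Real.exp (-β * x)) |h₂' x|)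
          ≤ abs (h₁' x - h₂' x) :=
        le_trans (minlip _ _ _) (abs_abs_sub_abs_le_abs_sub _ _)
      rw [← sq_abs (min (Real.exp (-β * x)) |h₁' x| - min (Real.exp (-β * x)) |h₂' x|),
        ← sq_abs (h₁' x - h₂' x)]
      exact pow_le_pow_left₀ (abs_nonneg _) h1 2
    have hmm : Measurable fun x =>
        (min (Real.exp (-β * x)) |h₁' x| - min (Real.exp (-β * x)) |h₂' x|) ^ 2
          * Real.exp (β * x) := by
      have e : Measurable fun x : ℝ => Real.exp (-β * x) :=
        Real.measurable_exp.comp (measurable_const.mul measurable_id)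
      exact (((e.min hm₁.abs).sub (e.min hm₂.abs)).pow_const 2).mul
        (Real.measurable_exp.comp (measurable_const.mul measurable_id))
    have hintl : IntegrableOn (fun x =>
        (min (Real.exp (-β * x)) |h₁' x| - min (Real.exp (-β * x)) |h₂' x|) ^ 2
          * Real.exp (β * x)) (Set.Ici 0) := by
      refine Integrable.mono' hint₁₂ hmm.aestronglyMeasurable (ae_of_all _ fun x => ?_)
      rw [Real.norm_eq_abs, abs_of_nonneg (mul_nonneg (sq_nonneg _) (Real.exp_nonneg _))]
      exact key x
    exact setIntegral_mono_on hintl hint₁₂ measurableSet_Ici (fun x _ => key x)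
  · intro x
    have h0 : (fun y : ℝ => min (Real.exp (-β * y)) |(0:ℝ)|) = fun _ => (0:ℝ) :=
      funext fun y => by rw [abs_zero]; exact min_eq_right (Real.exp_nonneg _)
    rw [show (∫ y in Set.Ici x, min (Real.exp (-β * y)) |(0:ℝ)|)
        = ∫ _ in Set.Ici x, (0:ℝ) from by rw [h0]]
    simp
end
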